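/- Let F_q be a finite field with q elements and n odd, α = (-1)^{(n+1)/2}. Then N_{A_n}(α) = (q^{(n+1)/2} - 1)(q^{(n+3)/2} - 1)/(q² - 1) + q^{(n+1)/2}. -/

import Mathlib

/-- Extension of `x : Fin n → F` to all of `ℕ`, with value `1` outside `{1, …, n}`
(1-indexed: `extA x k = x (k-1)` for `1 ≤ k ≤ n`). -/
def extA {F : Type*} [One F] {n : ℕ} (x : Fin n → F) (k : ℕ) : F :=
  if h : 1 ≤ k ∧ k ≤ n then x ⟨k - 1, by omega⟩ else 1

/-- Number of points over `F` of the type `Aₙ` variety `X_{Aₙ}(α, 1, …, 1)`: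
solutions of `xₖ xₖ' = 1 + cₖ x_{k-1} x_{k+1}` with `c₁ = α`, `cₖ = 1` otherwise,
and the convention `x₀ = x_{n+1} = 1`. -/
noncomputable def NA (F : Type*) [Field F] (n : ℕ) (α : F) : ℕ :=
  Nat.card {p : (Fin n → F) × (Fin n → F) //
    ∀ k, 1 ≤ k → k ≤ n →
      extA p.1 k * extA p.2 k =
        1 + (if k = 1 then α else 1) * extA p.1 (k - 1) * extA p.1 (k + 1)}


section Aux
variable {F : Type*} [Field F]

def ACond (n : ℕ) (α : F) (p : (Fin n → F) × (Fin n → F)) : Prop :=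
  ∀ k, 1 ≤ k → k ≤ n →
    extA p.1 k * extA p.2 k =
      1 + (if k = 1 then α else 1) * extA p.1 (k - 1) * extA p.1 (k + 1)

lemma NA_def (n : ℕ) (α : F) : NA F n α = Nat.card {p // ACond n α p} := rfl

lemma extA_eval {n : ℕ} (x : Fin n → F) (k : ℕ) (h1 : 1 ≤ k) (h2 : k ≤ n) :
    extA x k = x ⟨k - 1, by omega⟩ := dif_pos ⟨h1, h2⟩

lemma extA_zero {n : ℕ} (x : Fin n → F) : extA x 0 = 1 := dif_neg (by omega)

lemma extA_gt {n : ℕ} (x : Fin n → F) (k : ℕ) (h : n < k) : extA x k = 1 :=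
  dif_neg (by omega)

lemma extA_tail {n : ℕ} (x : Fin (n + 1) → F) (k : ℕ) (h1 : 1 ≤ k) :
    extA (Fin.tail x) k = extA x (k + 1) := by
  by_cases h2 : k ≤ n
  · rw [extA_eval _ k h1 h2, extA_eval x (k + 1) (by omega) (by omega)]
    show x (Fin.succ _) = _
    congr 1
    ext
    simp [Fin.val_succ]
    omega
  · rw [extA_gt _ k (by omega), extA_gt x (k + 1) (by omega)]

lemma extA_one {n : ℕ} (x : Fin (n + 1) → F) : extA x 1 = x 0 := by
  rw [extA_eval x 1 le_rfl (by omega)]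
  rfl

lemma condA {n : ℕ} (α u : F) (hu : u ≠ 0) (x x' : Fin (n + 1) → F) (h0 : x 0 = u) :
    ACond (n + 1) α (x, x') ↔
      (ACond n u (Fin.tail x, Fin.tail x') ∧ x' 0 = (1 + α * extA x 2) * u⁻¹) := by
  constructor
  · intro h
    refine ⟨?_, ?_⟩
    · intro j hj1 hj2
      have hk := h (j + 1) (by omega) (by omega)
      show extA (Fin.tail x) j * extA (Fin.tail x') j =
        1 + (if j = 1 then u else 1) * extA (Fin.tail x) (j - 1) * extA (Fin.tail x) (j + 1)
      rw [extA_tail x j hj1, extA_tail x' j hj1, extA_tail x (j + 1) (by omega)]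
      rcases eq_or_ne j 1 with rfl | hj
      · rw [if_pos rfl, extA_zero]
        norm_num at hk
        rw [extA_one, h0] at hk
        rw [hk]; ring
      · rw [if_neg hj]
        rw [if_neg (by omega : j + 1 ≠ 1), Nat.add_sub_cancel] at hk
        rw [extA_tail x (j - 1) (by omega), (by omega : j - 1 + 1 = j)]
        exact hk
    · have h1 := h 1 (by omega) (by omega)
      rw [if_pos rfl] at h1
      replace h1 : extA x 1 * extA x' 1 = 1 + α * extA x (1 - 1) * extA x (1 + 1) := h1
      norm_num at h1
      rw [extA_one, extA_one, extA_zero, h0] at h1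
      rw [eq_mul_inv_iff_mul_eq₀ hu]
      linear_combination h1
  · rintro ⟨hc, hb⟩ k hk1 hk2
    match k, hk1 with
    | 1, _ =>
      show extA x 1 * extA x' 1 = 1 + (if 1 = 1 then α else 1) * extA x 0 * extA x 2
      rw [extA_one, extA_one, extA_zero, h0, hb, if_pos rfl]
      field_simp
    | (i + 2), _ =>
      have hcj := hc (i + 1) (by omega) (by omega)
      show extA x (i + 2) * extA x' (i + 2) =
        1 + (if i + 2 = 1 then α else 1) * extA x (i + 2 - 1) * extA x (i + 2 + 1)
      rw [if_neg (by omega : i + 2 ≠ 1), (by omega : i + 2 - 1 = i + 1)]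
      replace hcj : extA (Fin.tail x) (i + 1) * extA (Fin.tail x') (i + 1) =
          1 + (if i + 1 = 1 then u else 1) * extA (Fin.tail x) i * extA (Fin.tail x) (i + 2) := hcj
      rw [extA_tail x (i + 1) (by omega), extA_tail x' (i + 1) (by omega),
        extA_tail x (i + 2) (by omega)] at hcj
      rcases Nat.eq_zero_or_pos i with rfl | hi
      · rw [if_pos rfl, extA_zero] at hcj
        rw [hcj, extA_one, h0]; ring
      · rw [if_neg (by omega : i + 1 ≠ 1), extA_tail x i (by omega)] at hcj
        exact hcj
lemma extA_two {n : ℕ} (x : Fin (n + 2) → F) : extA x 2 = x 1 := by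
  have h : (⟨2 - 1, by omega⟩ : Fin (n + 2)) = 1 := by
    apply Fin.ext
    simp
  rw [extA_eval x 2 (by omega) (by omega), h]

lemma condB {n : ℕ} (α : F) (hα : α ≠ 0) (x x' : Fin (n + 2) → F) (h0 : x 0 = 0) :
    ACond (n + 2) α (x, x') ↔
      (x 1 = -α⁻¹ ∧ x' 1 = -α ∧
        ACond n (-α⁻¹) (Fin.tail (Fin.tail x), Fin.tail (Fin.tail x'))) := by
  have hαα : α * α⁻¹ = 1 := mul_inv_cancel₀ hα
  constructor
  · intro h
    have h1 := h 1 (by omega) (by omega)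
    rw [if_pos rfl] at h1
    replace h1 : extA x 1 * extA x' 1 = 1 + α * extA x (1 - 1) * extA x (1 + 1) := h1
    norm_num at h1
    rw [extA_one, extA_zero, extA_two, h0] at h1
    have hx1 : x 1 = -α⁻¹ := by
      linear_combination (-α⁻¹) * h1 + (-(x 1)) * hαα
    have h2 := h 2 (by omega) (by omega)
    rw [if_neg (by omega)] at h2
    replace h2 : extA x 2 * extA x' 2 = 1 + 1 * extA x (2 - 1) * extA x (2 + 1) := h2
    norm_num at h2
    rw [extA_one, extA_two x, extA_two x', h0] at h2
    have hx1' : x' 1 = -α := by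
      rw [hx1] at h2
      linear_combination (-α) * h2 - x' 1 * hαα
    refine ⟨hx1, hx1', ?_⟩
    intro j hj1 hj2
    have hk := h (j + 2) (by omega) (by omega)
    rw [if_neg (by omega : j + 2 ≠ 1)] at hk
    replace hk : extA x (j + 2) * extA x' (j + 2) =
        1 + 1 * extA x (j + 2 - 1) * extA x (j + 2 + 1) := hk
    rw [(by omega : j + 2 - 1 = j + 1)] at hk
    show extA (Fin.tail (Fin.tail x)) j * extA (Fin.tail (Fin.tail x')) j =
      1 + (if j = 1 then -α⁻¹ else 1) * extA (Fin.tail (Fin.tail x)) (j - 1) *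
        extA (Fin.tail (Fin.tail x)) (j + 1)
    rw [extA_tail (Fin.tail x) j hj1, extA_tail x (j + 1) (by omega),
      extA_tail (Fin.tail x') j hj1, extA_tail x' (j + 1) (by omega),
      extA_tail (Fin.tail x) (j + 1) (by omega), extA_tail x (j + 1 + 1) (by omega),
      (by omega : j + 1 + 1 = j + 2)]
    rcases eq_or_ne j 1 with rfl | hj
    · rw [if_pos rfl, (by norm_num : (1:ℕ) - 1 = 0), extA_zero]
      rw [(by norm_num : (1:ℕ) + 1 = 2), extA_two, hx1] at hk
      rw [hk]; ring
    · rw [if_neg hj, extA_tail (Fin.tail x) (j - 1) (by omega), (by omega : j - 1 + 1 = j),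
        extA_tail x j (by omega)]
      exact hk
  · rintro ⟨hx1, hx1', hc⟩ k hk1 hk2
    match k, hk1 with
    | 1, _ =>
      show extA x 1 * extA x' 1 = 1 + (if 1 = 1 then α else 1) * extA x 0 * extA x 2
      rw [extA_one, extA_zero, extA_two, h0, hx1, if_pos rfl]
      linear_combination hαα
    | 2, _ =>
      show extA x 2 * extA x' 2 = 1 + (if 2 = 1 then α else 1) * extA x 1 * extA x 3
      rw [extA_two, extA_two, extA_one, h0, hx1, hx1', if_neg (by omega)]
      linear_combination hαα
    | (i + 3), _ =>
      have hcj := hc (i + 1) (by omega) (by omega)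
      replace hcj : extA (Fin.tail (Fin.tail x)) (i + 1) * extA (Fin.tail (Fin.tail x')) (i + 1) =
          1 + (if i + 1 = 1 then -α⁻¹ else 1) * extA (Fin.tail (Fin.tail x)) (i + 1 - 1) *
            extA (Fin.tail (Fin.tail x)) (i + 1 + 1) := hcj
      rw [(by omega : i + 1 - 1 = i)] at hcj
      rw [extA_tail (Fin.tail x) (i + 1) (by omega), extA_tail (Fin.tail x') (i + 1) (by omega),
        extA_tail (Fin.tail x) (i + 1 + 1) (by omega)] at hcj
      rw [(by omega : i + 1 + 1 = i + 2)] at hcj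
      rw [extA_tail x (i + 2) (by omega), extA_tail x' (i + 2) (by omega),
        extA_tail x (i + 2 + 1) (by omega)] at hcj
      rw [(by omega : i + 2 + 1 = i + 3)] at hcj
      show extA x (i + 3) * extA x' (i + 3) =
        1 + (if i + 3 = 1 then α else 1) * extA x (i + 3 - 1) * extA x (i + 3 + 1)
      rw [if_neg (by omega : i + 3 ≠ 1), (by omega : i + 3 - 1 = i + 2)]
      rcases Nat.eq_zero_or_pos i with rfl | hi
      · rw [if_pos (by norm_num : (0:ℕ) + 1 = 1), extA_zero] at hcj
        rw [(by norm_num : (0:ℕ) + 2 = 2), extA_two, hx1]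
        rw [hcj]; ring
      · rw [if_neg (by omega : i + 1 ≠ 1), extA_tail (Fin.tail x) i (by omega),
          extA_tail x (i + 1) (by omega), (by omega : i + 1 + 1 = i + 2)] at hcj
        exact hcj
lemma fin_one_eq_succ_zero {n : ℕ} : (1 : Fin (n + 2)) = Fin.succ 0 := by
  apply Fin.ext
  simp

lemma cons_cons_self {n : ℕ} (x : Fin (n + 2) → F) :
    Fin.cons (x 0) (Fin.cons (x 1) (Fin.tail (Fin.tail x))) = x := by
  have h1 : Fin.tail x 0 = x 1 := by
    rw [fin_one_eq_succ_zero]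
    rfl
  calc Fin.cons (x 0) (Fin.cons (x 1) (Fin.tail (Fin.tail x)))
      = Fin.cons (x 0) (Fin.cons (Fin.tail x 0) (Fin.tail (Fin.tail x))) := by rw [h1]
    _ = Fin.cons (x 0) (Fin.tail x) := by rw [Fin.cons_self_tail]
    _ = x := Fin.cons_self_tail x

lemma card_fiber_ne {n : ℕ} (α u : F) (hu : u ≠ 0) :
    Nat.card {p : (Fin (n + 1) → F) × (Fin (n + 1) → F) // ACond (n + 1) α p ∧ p.1 0 = u}
      = NA F n u := by
  rw [NA_def]
  apply Nat.card_congr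
  exact {
    toFun := fun p => ⟨(Fin.tail p.1.1, Fin.tail p.1.2),
      ((condA α u hu p.1.1 p.1.2 p.2.2).1 p.2.1).1⟩
    invFun := fun q => ⟨(Fin.cons u q.1.1,
        Fin.cons ((1 + α * extA (Fin.cons u q.1.1) 2) * u⁻¹) q.1.2), by
      refine ⟨?_, by simp⟩
      refine (condA α u hu _ _ (by exact Fin.cons_zero _ _)).2 ⟨?_, ?_⟩
      · rw [Fin.tail_cons, Fin.tail_cons]; exact q.2
      · rw [Fin.cons_zero]⟩
    left_inv := by
      rintro ⟨⟨x, x'⟩, hc, hx0⟩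
      have hb := ((condA α u hu x x' hx0).1 hc).2
      have hx : Fin.cons u (Fin.tail x) = x := by
        rw [← hx0]; exact Fin.cons_self_tail _
      apply Subtype.ext
      dsimp only
      rw [hx, ← hb, Fin.cons_self_tail]
    right_inv := by
      rintro ⟨⟨y, y'⟩, hq⟩
      apply Subtype.ext
      dsimp only
      rw [Fin.tail_cons, Fin.tail_cons] }

end Aux

section Main
variable {F : Type*} [Field F] [Fintype F]

lemma card_fiber_zero {n : ℕ} (α : F) (hα : α ≠ 0) :
    Nat.card {p : (Fin (n + 2) → F) × (Fin (n + 2) → F) // ACond (n + 2) α p ∧ p.1 0 = 0}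
      = Fintype.card F * NA F n (-α⁻¹) := by
  rw [NA_def, ← Nat.card_eq_fintype_card, ← Nat.card_prod]
  apply Nat.card_congr
  exact {
    toFun := fun p => (p.1.2 0, ⟨(Fin.tail (Fin.tail p.1.1), Fin.tail (Fin.tail p.1.2)),
      ((condB α hα p.1.1 p.1.2 p.2.2).1 p.2.1).2.2⟩)
    invFun := fun q => ⟨(Fin.cons 0 (Fin.cons (-α⁻¹) q.2.1.1),
        Fin.cons q.1 (Fin.cons (-α) q.2.1.2)), by
      refine ⟨?_, by simp⟩
      refine (condB α hα _ _ (by exact Fin.cons_zero _ _)).2 ⟨?_, ?_, ?_⟩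
      · rw [fin_one_eq_succ_zero, Fin.cons_succ, Fin.cons_zero]
      · rw [fin_one_eq_succ_zero, Fin.cons_succ, Fin.cons_zero]
      · rw [Fin.tail_cons, Fin.tail_cons, Fin.tail_cons, Fin.tail_cons]
        exact q.2.2⟩
    left_inv := by
      rintro ⟨⟨x, x'⟩, hc, hx0⟩
      obtain ⟨hx1, hx1', hcc⟩ := (condB α hα x x' hx0).1 hc
      apply Subtype.ext
      dsimp only
      rw [← hx0, ← hx1, ← hx1', cons_cons_self, cons_cons_self]
    right_inv := by
      rintro ⟨t, ⟨⟨y, y'⟩, hq⟩⟩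
      apply Prod.ext
      · simp
      · apply Subtype.ext
        dsimp only
        rw [Fin.tail_cons, Fin.tail_cons, Fin.tail_cons, Fin.tail_cons] }

lemma natCard_sigma {ι : Type*} [Fintype ι] (f : ι → Type*) [∀ i, Finite (f i)] :
    Nat.card (Σ i, f i) = ∑ i, Nat.card (f i) := by
  letI := fun i => Fintype.ofFinite (f i)
  simp only [Nat.card_eq_fintype_card]
  exact Fintype.card_sigma

lemma NA_rec [DecidableEq F] (n : ℕ) (α : F) (hα : α ≠ 0) :
    NA F (n + 2) α = (∑ u ∈ Finset.univ \ {(0 : F)}, NA F (n + 1) u)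
      + Fintype.card F * NA F n (-α⁻¹) := by
  classical
  rw [NA_def]
  have e1 : {p : (Fin (n + 2) → F) × (Fin (n + 2) → F) // ACond (n + 2) α p} ≃
      Σ u : F, {p : (Fin (n + 2) → F) × (Fin (n + 2) → F) // ACond (n + 2) α p ∧ p.1 0 = u} := {
    toFun := fun p => ⟨p.1.1 0, ⟨p.1, p.2, rfl⟩⟩
    invFun := fun q => ⟨q.2.1, q.2.2.1⟩
    left_inv := fun p => rfl
    right_inv := by
      rintro ⟨u, ⟨p, hp, hu⟩⟩
      subst hu
      rfl }
  rw [Nat.card_congr e1, natCard_sigma]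
  rw [Finset.sum_eq_sum_sdiff_singleton_add (Finset.mem_univ (0 : F))]
  congr 1
  · apply Finset.sum_congr rfl
    intro u hu
    have hu0 : u ≠ 0 := by simpa using (Finset.mem_sdiff.1 hu).2
    exact card_fiber_ne α u hu0
  · exact card_fiber_zero α hα

lemma NA_zero (α : F) : NA F 0 α = 1 := by
  rw [NA_def]
  have h : ∀ p : (Fin 0 → F) × (Fin 0 → F), ACond 0 α p := by
    intro p k hk1 hk2
    exact absurd hk2 (by omega)
  rw [Nat.card_congr (Equiv.subtypeUnivEquiv h)]
  exact Nat.card_unique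

lemma card_ne_zero' : Nat.card {a : F // a ≠ 0} = Fintype.card F - 1 := by
  rw [← Nat.card_congr (unitsEquivNeZero (G₀ := F)), Nat.card_units, Nat.card_eq_fintype_card]

lemma card_pair_mul_ne (c : F) (hc : c ≠ 0) :
    Nat.card {p : F × F // p.1 * p.2 = c} = Fintype.card F - 1 := by
  have e : {p : F × F // p.1 * p.2 = c} ≃ {a : F // a ≠ 0} := {
    toFun := fun p => ⟨p.1.1, by
      intro h
      apply hc
      rw [← p.2]
      show p.1.1 * p.1.2 = 0
      rw [h, zero_mul]⟩
    invFun := fun a => ⟨(a.1, c * a.1⁻¹), by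
      show a.1 * (c * a.1⁻¹) = c
      rw [mul_comm c, ← mul_assoc, mul_inv_cancel₀ a.2, one_mul]⟩
    left_inv := by
      rintro ⟨⟨a, b⟩, hab⟩
      have ha : a ≠ 0 := by
        intro h
        apply hc
        rw [← hab]
        show a * b = 0
        rw [h, zero_mul]
      apply Subtype.ext
      dsimp only
      replace hab : a * b = c := hab
      have hb : c * a⁻¹ = b := by
        rw [← hab, mul_comm a b, mul_assoc, mul_inv_cancel₀ ha, mul_one]
      rw [hb]
    right_inv := fun a => rfl }
  rw [Nat.card_congr e, card_ne_zero']

lemma card_pair_mul_zero :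
    Nat.card {p : F × F // p.1 * p.2 = 0} = 2 * Fintype.card F - 1 := by
  classical
  have e : {p : F × F // p.1 * p.2 = 0} ≃ F ⊕ {a : F // a ≠ 0} := {
    toFun := fun p => if h : p.1.1 = 0 then Sum.inl p.1.2 else Sum.inr ⟨p.1.1, h⟩
    invFun := fun s => match s with
      | Sum.inl b => ⟨(0, b), by show (0 : F) * b = 0; rw [zero_mul]⟩
      | Sum.inr a => ⟨(a.1, 0), by show a.1 * 0 = 0; rw [mul_zero]⟩
    left_inv := by
      rintro ⟨⟨a, b⟩, hab⟩
      replace hab : a * b = 0 := hab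
      by_cases h : a = 0
      · subst h
        simp
      · simp only [dif_neg h]
        have hb : b = 0 := by
          rcases mul_eq_zero.1 hab with h' | h'
          · exact absurd h' h
          · exact h'
        apply Subtype.ext
        dsimp only
        rw [hb]
    right_inv := by
      rintro (b | a)
      · simp
      · simp only [dif_neg a.2] }
  rw [Nat.card_congr e, Nat.card_sum, card_ne_zero', Nat.card_eq_fintype_card]
  have hq : 1 ≤ Fintype.card F := Fintype.card_pos
  omega

lemma NA_one [DecidableEq F] (c : F) :
    NA F 1 c = if c = -1 then 2 * Fintype.card F - 1 else Fintype.card F - 1 := by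
  classical
  have hcond : ∀ p : (Fin 1 → F) × (Fin 1 → F), ACond 1 c p ↔ p.1 0 * p.2 0 = 1 + c := by
    rintro ⟨x, x'⟩
    constructor
    · intro h
      have h1 := h 1 le_rfl le_rfl
      rw [if_pos rfl] at h1
      replace h1 : extA x 1 * extA x' 1 = 1 + c * extA x (1 - 1) * extA x (1 + 1) := h1
      norm_num at h1
      rw [extA_one, extA_one, extA_zero, extA_gt x 2 (by omega)] at h1
      show x 0 * x' 0 = 1 + c
      rw [h1]; ring
    · intro h k hk1 hk2
      have hk : k = 1 := by omega
      subst hk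
      show extA x 1 * extA x' 1 = 1 + (if 1 = 1 then c else 1) * extA x 0 * extA x 2
      rw [extA_one, extA_one, extA_zero, extA_gt x 2 (by omega), if_pos rfl]
      replace h : x 0 * x' 0 = 1 + c := h
      rw [h]; ring
  have e : {p : (Fin 1 → F) × (Fin 1 → F) // ACond 1 c p} ≃
      {p : F × F // p.1 * p.2 = 1 + c} := {
    toFun := fun p => ⟨(p.1.1 0, p.1.2 0), (hcond p.1).1 p.2⟩
    invFun := fun p => ⟨(fun _ => p.1.1, fun _ => p.1.2), (hcond _).2 p.2⟩
    left_inv := by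
      rintro ⟨⟨x, x'⟩, h⟩
      apply Subtype.ext
      dsimp only
      have hx : (fun _ : Fin 1 => x 0) = x := by
        funext i
        rw [Subsingleton.elim i 0]
      have hx' : (fun _ : Fin 1 => x' 0) = x' := by
        funext i
        rw [Subsingleton.elim i 0]
      rw [hx, hx']
    right_inv := fun p => rfl }
  rw [NA_def, Nat.card_congr e]
  by_cases hc : c = -1
  · rw [if_pos hc]
    have h0 : (1 : F) + c = 0 := by rw [hc]; ring
    rw [h0, card_pair_mul_zero]
  · rw [if_neg hc]
    apply card_pair_mul_ne
    intro h
    apply hc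
    linear_combination h

lemma neg_one_pow_ne_zero' {k : ℕ} : ((-1 : F) ^ k) ≠ 0 :=
  pow_ne_zero k (by norm_num)

lemma inv_neg_one_pow {k : ℕ} : ((-1 : F) ^ k)⁻¹ = (-1) ^ k := by
  rw [← inv_pow]
  norm_num

lemma indicator_iff {r : ℕ} (α : F) (hα : α ≠ 0) :
    (-α⁻¹ = (-1 : F) ^ (r + 1)) ↔ (α = (-1 : F) ^ (r + 2)) := by
  constructor
  · intro h
    have h2 : α⁻¹ = (-1 : F) ^ (r + 2) := by
      rw [pow_succ]
      linear_combination -h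
    calc α = (α⁻¹)⁻¹ := (inv_inv α).symm
    _ = ((-1 : F) ^ (r + 2))⁻¹ := by rw [h2]
    _ = (-1 : F) ^ (r + 2) := inv_neg_one_pow
  · intro h
    have h2 : α⁻¹ = (-1 : F) ^ (r + 2) := by rw [h, inv_neg_one_pow]
    rw [h2, pow_succ]
    ring

lemma card_sdiff_zero [DecidableEq F] : ((Finset.univ \ {(0 : F)} : Finset F)).card = Fintype.card F - 1 := by
  classical
  rw [Finset.card_sdiff_of_subset (by simp)]
  simp

lemma key [DecidableEq F] : ∀ n : ℕ, ∀ α : F, α ≠ 0 →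
    ((n % 2 = 0 → (NA F n α : ℤ) * ((Fintype.card F : ℤ) ^ 2 - 1) =
        (Fintype.card F : ℤ) ^ (n + 2) - 1) ∧
     (n % 2 = 1 → (NA F n α : ℤ) * ((Fintype.card F : ℤ) ^ 2 - 1) =
        ((Fintype.card F : ℤ) ^ ((n + 1) / 2) - 1) *
          ((Fintype.card F : ℤ) ^ ((n + 3) / 2) - 1)
        + (if α = (-1 : F) ^ ((n + 1) / 2) then
            (Fintype.card F : ℤ) ^ ((n + 1) / 2) * ((Fintype.card F : ℤ) ^ 2 - 1) else 0))) := by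
  have hq : 1 ≤ Fintype.card F := Fintype.card_pos
  intro n
  induction n using Nat.strong_induction_on with
  | _ n ih =>
    match n with
    | 0 =>
      intro α hα
      refine ⟨fun _ => ?_, fun h => absurd h (by omega)⟩
      rw [NA_zero]
      push_cast
      ring
    | 1 =>
      intro α hα
      refine ⟨fun h => absurd h (by omega), fun _ => ?_⟩
      rw [NA_one]
      have h1 : ((1 : ℕ) + 1) / 2 = 1 := by norm_num
      have h2 : ((1 : ℕ) + 3) / 2 = 2 := by norm_num
      rw [h1, h2, (pow_one (-1 : F))]
      by_cases hc : α = -1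
      · rw [if_pos hc, if_pos hc, Nat.cast_sub (by omega)]
        push_cast
        ring
      · rw [if_neg hc, if_neg hc, Nat.cast_sub (by omega)]
        push_cast
        ring
    | (n + 2) =>
      intro α hα
      have hMinv : (-α⁻¹ : F) ≠ 0 := neg_ne_zero.2 (inv_ne_zero hα)
      have hrec := NA_rec n α hα
      have base : ((NA F (n + 2) α : ℤ)) * ((Fintype.card F : ℤ) ^ 2 - 1) =
          (∑ u ∈ Finset.univ \ {(0 : F)},
            (NA F (n + 1) u : ℤ) * ((Fintype.card F : ℤ) ^ 2 - 1))
          + (Fintype.card F : ℤ) *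
              ((NA F n (-α⁻¹) : ℤ) * ((Fintype.card F : ℤ) ^ 2 - 1)) := by
        rw [hrec]
        push_cast
        rw [add_mul, Finset.sum_mul]
        ring
      rcases Nat.even_or_odd n with ⟨r, hr⟩ | ⟨r, hr⟩
      · -- n = r + r, n + 2 even
        subst hr
        refine ⟨fun _ => ?_, fun h => absurd h (by omega)⟩
        rw [base]
        have he1 : ((r + r + 1) + 1) / 2 = r + 1 := by omega
        have he2 : ((r + r + 1) + 3) / 2 = r + 2 := by omega
        have hsum : ∀ u ∈ Finset.univ \ {(0 : F)},
            (NA F (r + r + 1) u : ℤ) * ((Fintype.card F : ℤ) ^ 2 - 1) =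
            ((Fintype.card F : ℤ) ^ (r + 1) - 1) * ((Fintype.card F : ℤ) ^ (r + 2) - 1)
            + (if u = (-1 : F) ^ (r + 1) then
                (Fintype.card F : ℤ) ^ (r + 1) * ((Fintype.card F : ℤ) ^ 2 - 1) else 0) := by
          intro u hu
          have hu0 : u ≠ 0 := by simpa using (Finset.mem_sdiff.1 hu).2
          have := (ih (r + r + 1) (by omega) u hu0).2 (by omega)
          rw [he1, he2] at this
          exact this
        rw [Finset.sum_congr rfl hsum, Finset.sum_add_distrib, Finset.sum_const,
          Finset.sum_ite_eq' (Finset.univ \ {(0 : F)}) ((-1 : F) ^ (r + 1)),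
          if_pos (by simp [neg_one_pow_ne_zero']), card_sdiff_zero,
          (ih (r + r) (by omega) (-α⁻¹) hMinv).1 (by omega)]
        rw [nsmul_eq_mul, Nat.cast_sub (by omega)]
        push_cast
        ring
      · -- n = 2r + 1, n + 2 odd
        subst hr
        refine ⟨fun h => absurd h (by omega), fun _ => ?_⟩
        rw [base]
        have he1 : ((2 * r + 1 + 2) + 1) / 2 = r + 2 := by omega
        have he2 : ((2 * r + 1 + 2) + 3) / 2 = r + 3 := by omega
        rw [he1, he2]
        have hsum : ∀ u ∈ Finset.univ \ {(0 : F)},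
            (NA F (2 * r + 1 + 1) u : ℤ) * ((Fintype.card F : ℤ) ^ 2 - 1) =
            (Fintype.card F : ℤ) ^ (2 * r + 4) - 1 := by
          intro u hu
          have hu0 : u ≠ 0 := by simpa using (Finset.mem_sdiff.1 hu).2
          have := (ih (2 * r + 1 + 1) (by omega) u hu0).1 (by omega)
          rw [(by omega : (2 * r + 1 + 1) + 2 = 2 * r + 4)] at this
          exact this
        have hodd := (ih (2 * r + 1) (by omega) (-α⁻¹) hMinv).2 (by omega)
        have hf1 : ((2 * r + 1) + 1) / 2 = r + 1 := by omega
        have hf2 : ((2 * r + 1) + 3) / 2 = r + 2 := by omega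
        rw [hf1, hf2] at hodd
        rw [Finset.sum_congr rfl hsum, Finset.sum_const, card_sdiff_zero, hodd,
          nsmul_eq_mul, Nat.cast_sub (by omega)]
        rw [if_congr (indicator_iff α hα) rfl rfl]
        by_cases hα2 : α = (-1 : F) ^ (r + 2)
        · rw [if_pos hα2, if_pos hα2]
          push_cast
          ring
        · rw [if_neg hα2, if_neg hα2]
          push_cast
          ring

end Main

theorem stmt_11 (F : Type*) [Field F] [Fintype F] (n : ℕ) (hn : 1 ≤ n) (hodd : Odd n) :
    (NA F n ((-1) ^ ((n + 1) / 2)) : ℤ) * ((Fintype.card F : ℤ) ^ 2 - 1) =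
      ((Fintype.card F : ℤ) ^ ((n + 1) / 2) - 1) *
        ((Fintype.card F : ℤ) ^ ((n + 3) / 2) - 1) +
      (Fintype.card F : ℤ) ^ ((n + 1) / 2) * ((Fintype.card F : ℤ) ^ 2 - 1) := by
  classical
  obtain ⟨m, hm⟩ := hodd
  have h := (key (F := F) n ((-1) ^ ((n + 1) / 2)) neg_one_pow_ne_zero').2 (by omega)
  rw [if_pos rfl] at h
  exact h
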